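/- Let T be the real vector space of lower triangular double sequences, let [-1] be the right column shift on T, let Σ̄ : T → ℝ be an ℝ-linear map restricting to the total sum on finitely supported elements of T, and let ε be the endomorphism of Λ = T ⊕ ℝ given by ε(a, r) = (a[-1], Σ̄(a)). Then ⋂_{n∈ℕ} range(ε^n) = {0} × ℝ; in particular this intersection is nonzero and is contained in the kernel of ε. -/
import Mathlib


/-- The real vector space `T` of lower triangular double sequences:
functions `a : ℕ × ℕ → ℝ` with `a (i, j) = 0` whenever `j > i`. -/
def LowerTriangular : Submodule ℝ (ℕ × ℕ → ℝ) where
  carrier := {a | ∀ p : ℕ × ℕ, p.1 < p.2 → a p = 0}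
  add_mem' := by
    intro a b ha hb p hp
    simp only [Pi.add_apply, ha p hp, hb p hp, add_zero]
  zero_mem' := by
    intro p _
    rfl
  smul_mem' := by
    intro c a ha p hp
    simp only [Pi.smul_apply, ha p hp, smul_zero]

/-- The right column shift on double sequences:
`(a[-1])_{i j} = a_{i, j-1}` if `1 ≤ j ≤ i` and `0` otherwise. -/
def shiftFun (a : ℕ × ℕ → ℝ) : ℕ × ℕ → ℝ :=
  fun p => if 1 ≤ p.2 ∧ p.2 ≤ p.1 then a (p.1, p.2 - 1) else 0


def sing (m k : ℕ) (r : ℝ) : ℕ × ℕ → ℝ := fun p => if p = (m, k) then r else 0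

lemma finsum_sing (m k : ℕ) (r : ℝ) : ∑ᶠ p : ℕ × ℕ, sing m k r p = r := by
  have := finsum_eq_single (sing m k r) (m, k) (fun x hx => by simp [sing, hx])
  simpa [sing] using this

lemma sing_supp (m k : ℕ) (r : ℝ) : (Function.support (sing m k r)).Finite := by
  apply Set.Finite.subset (Set.finite_singleton ((m,k) : ℕ × ℕ))
  intro p hp
  simp only [Function.mem_support, sing, ne_eq, ite_eq_right_iff, not_forall] at hp
  simpa using hp.1

lemma sing_mem (m k : ℕ) (r : ℝ) (h : k ≤ m) : sing m k r ∈ LowerTriangular := by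
  intro p hp
  unfold sing
  split
  · next h' => subst h'; simp only at hp; omega
  · rfl

lemma shiftFun_sing (m k : ℕ) (r : ℝ) (h : k < m) :
    shiftFun (sing m k r) = sing m (k+1) r := by
  funext p
  obtain ⟨i, j⟩ := p
  simp only [shiftFun, sing, Prod.mk.injEq]
  split_ifs <;> first | rfl | omega

lemma shiftFun_sing_diag (m : ℕ) (r : ℝ) : shiftFun (sing m m r) = 0 := by
  funext p
  obtain ⟨i, j⟩ := p
  simp only [shiftFun, sing, Prod.mk.injEq, Pi.zero_apply]
  split_ifs <;> first | rfl | omega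

lemma iter_fst_zero
    (shift : LowerTriangular →ₗ[ℝ] LowerTriangular)
    (hshift : ∀ a : LowerTriangular,
      ((shift a : ℕ × ℕ → ℝ)) = shiftFun (a : ℕ × ℕ → ℝ))
    (Sbar : LowerTriangular →ₗ[ℝ] ℝ)
    (ε : LowerTriangular × ℝ →ₗ[ℝ] LowerTriangular × ℝ)
    (hε : ∀ x : LowerTriangular × ℝ, ε x = (shift x.1, Sbar x.1)) :
    ∀ (n : ℕ) (y : LowerTriangular × ℝ) (i j : ℕ), j < n →
      ((((⇑ε)^[n] y).1 : ℕ × ℕ → ℝ)) (i, j) = 0 := by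
  intro n
  induction n with
  | zero => intro y i j h; omega
  | succ n ih =>
    intro y i j h
    rw [Function.iterate_succ_apply', hε]
    simp only
    rw [hshift]
    unfold shiftFun
    simp only
    split_ifs with h1
    · exact ih y i (j-1) (by omega)
    · rfl

/-- with `T` the space of lower triangular double sequences,
`[-1]` the right column shift on `T`, `Σ̄ : T → ℝ` a linear extension of the
total sum on finitely supported elements, `Λ = T ⊕ ℝ` and
`ε (a, r) = (a[-1], Σ̄ a)`, one has `⋂ₙ range (ε^n) = {0} × ℝ`; in particular
this intersection is nonzero and contained in the kernel of `ε`. -/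
theorem iInter_range_eps_eq_zero_prod_real
    (shift : LowerTriangular →ₗ[ℝ] LowerTriangular)
    (hshift : ∀ a : LowerTriangular,
      ((shift a : ℕ × ℕ → ℝ)) = shiftFun (a : ℕ × ℕ → ℝ))
    (Sbar : LowerTriangular →ₗ[ℝ] ℝ)
    (hSbar : ∀ a : LowerTriangular,
      (Function.support (a : ℕ × ℕ → ℝ)).Finite →
        Sbar a = ∑ᶠ p : ℕ × ℕ, (a : ℕ × ℕ → ℝ) p)
    (ε : LowerTriangular × ℝ →ₗ[ℝ] LowerTriangular × ℝ)
    (hε : ∀ x : LowerTriangular × ℝ, ε x = (shift x.1, Sbar x.1)) :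
    (⋂ n : ℕ, Set.range ((⇑ε)^[n]))
        = {x : LowerTriangular × ℝ | x.1 = 0} ∧
    (⋂ n : ℕ, Set.range ((⇑ε)^[n])) ≠ ({0} : Set (LowerTriangular × ℝ)) ∧
    (⋂ n : ℕ, Set.range ((⇑ε)^[n])) ⊆ {x : LowerTriangular × ℝ | ε x = 0} := by
  have key : (⋂ n : ℕ, Set.range ((⇑ε)^[n]))
      = {x : LowerTriangular × ℝ | x.1 = 0} := by
    apply Set.Subset.antisymm
    · intro x hx
      simp only [Set.mem_iInter, Set.mem_range] at hx
      show x.1 = 0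
      apply Subtype.ext
      funext p
      obtain ⟨i, j⟩ := p
      obtain ⟨y, hy⟩ := hx (j + 1)
      have := iter_fst_zero shift hshift Sbar ε hε (j + 1) y i j (by omega)
      rw [hy] at this
      simpa using this
    · intro x hx
      simp only [Set.mem_setOf_eq] at hx
      simp only [Set.mem_iInter, Set.mem_range]
      intro n
      match n with
      | 0 => exact ⟨x, rfl⟩
      | m + 1 =>
        set r := x.2 with hr
        have claim : ∀ k (hk : k ≤ m),
            (⇑ε)^[k] ((⟨sing m 0 r, sing_mem m 0 r (Nat.zero_le m)⟩ : LowerTriangular), (0:ℝ))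
              = (⟨sing m k r, sing_mem m k r hk⟩, if k = 0 then (0:ℝ) else r) := by
          intro k
          induction k with
          | zero => intro _; simp
          | succ k ihk =>
            intro hk
            rw [Function.iterate_succ_apply', ihk (by omega), hε]
            simp only
            have h1 : shift (⟨sing m k r, sing_mem m k r (by omega)⟩ : LowerTriangular)
                = (⟨sing m (k+1) r, sing_mem m (k+1) r (by omega)⟩ : LowerTriangular) := by
              apply Subtype.ext
              rw [hshift]
              exact shiftFun_sing m k r (by omega)
            have h2 : Sbar (⟨sing m k r, sing_mem m k r (by omega)⟩ : LowerTriangular) = r := by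
              rw [hSbar _ (sing_supp m k r)]
              exact finsum_sing m k r
            rw [h1, h2]
            simp
        have final : (⇑ε)^[m+1] ((⟨sing m 0 r, sing_mem m 0 r (Nat.zero_le m)⟩ : LowerTriangular), (0:ℝ)) = x := by
          rw [Function.iterate_succ_apply', claim m le_rfl, hε]
          simp only
          have h1 : shift (⟨sing m m r, sing_mem m m r le_rfl⟩ : LowerTriangular) = 0 := by
            apply Subtype.ext
            rw [hshift]
            exact shiftFun_sing_diag m r
          have h2 : Sbar (⟨sing m m r, sing_mem m m r le_rfl⟩ : LowerTriangular) = r := by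
            rw [hSbar _ (sing_supp m m r)]
            exact finsum_sing m m r
          rw [h1, h2]
          rw [Prod.ext_iff]
          exact ⟨hx.symm, hr.symm⟩
        exact ⟨_, final⟩
  refine ⟨key, ?_, ?_⟩
  · rw [key]
    intro h
    have : ((0 : LowerTriangular), (1:ℝ)) ∈ ({0} : Set (LowerTriangular × ℝ)) := by
      rw [← h]; exact rfl
    simp only [Set.mem_singleton_iff, Prod.ext_iff] at this
    exact one_ne_zero this.2
  · rw [key]
    intro x hx
    simp only [Set.mem_setOf_eq] at hx ⊢
    rw [hε, hx]
    simp [Prod.ext_iff]
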